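/- Let B be a CI-BRG of a plant G (T_I non-conflicting, non-increasing, T_I-induced subnet acyclic and conflict-free), and let D be the set of dead markings of G. For any basis marking M_b of B, if R_I(M_b) ∩ D ≠ ∅ then R_I(M_b) ∩ D = {M_{b,max}}, the singleton consisting of the i-maximal marking of M_b. -/

import Mathlib

/-- A Petri net with `m` places and `n` transitions. -/
structure PetriNet (m n : ℕ) where
  Pre : Fin m → Fin n → ℕ
  Post : Fin m → Fin n → ℕ

namespace PetriNet

variable {m n : ℕ}

/-- Incidence matrix `C = Post - Pre`. -/
def C (N : PetriNet m n) (p : Fin m) (t : Fin n) : ℤ :=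
  (N.Post p t : ℤ) - (N.Pre p t : ℤ)

/-- Transition `t` is enabled at marking `M`. -/
def enabled (N : PetriNet m n) (M : Fin m → ℕ) (t : Fin n) : Prop :=
  ∀ p, N.Pre p t ≤ M p

/-- Firing transition `t` at marking `M`. -/
def fire (N : PetriNet m n) (M : Fin m → ℕ) (t : Fin n) : Fin m → ℕ :=
  fun p => M p + N.Post p t - N.Pre p t

/-- `fires N M σ M'` : the sequence `σ` is firable at `M` and yields `M'`. -/
inductive fires (N : PetriNet m n) : (Fin m → ℕ) → List (Fin n) → (Fin m → ℕ) → Prop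
  | nil (M : Fin m → ℕ) : fires N M [] M
  | cons {M M' : Fin m → ℕ} {t : Fin n} {σ : List (Fin n)} :
      N.enabled M t → fires N (N.fire M t) σ M' → fires N M (t :: σ) M'

/-- Firing vector of a sequence. -/
def fvec (σ : List (Fin n)) : Fin n → ℕ := fun t => σ.count t

/-- Arcs of the subnet induced by transition set `TI` (full net for `TI = Set.univ`). -/
def arc (N : PetriNet m n) (TI : Set (Fin n)) :
    (Fin m ⊕ Fin n) → (Fin m ⊕ Fin n) → Prop
  | Sum.inl p, Sum.inr t => t ∈ TI ∧ 0 < N.Pre p t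
  | Sum.inr t, Sum.inl p => t ∈ TI ∧ 0 < N.Post p t
  | _, _ => False

/-- The subnet induced by `TI` is acyclic: no directed cycle. -/
def SubnetAcyclic (N : PetriNet m n) (TI : Set (Fin n)) : Prop :=
  ∀ x, ¬ Relation.TransGen (N.arc TI) x x

/-- Transitions in structural conflict. -/
def Tconf (N : PetriNet m n) : Set (Fin n) :=
  {t | ∃ p, 0 < N.Pre p t ∧ ∃ t', t' ≠ t ∧ 0 < N.Pre p t'}

/-- `TI` is non-conflicting: `TI ⊆ T \ T_conf`. -/
def NonConflicting (N : PetriNet m n) (TI : Set (Fin n)) : Prop :=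
  ∀ t ∈ TI, t ∉ N.Tconf

/-- `TI` is non-increasing w.r.t. the GMEC weight vector `w`. -/
def NonIncreasing (N : PetriNet m n) (w : Fin m → ℤ) (TI : Set (Fin n)) : Prop :=
  ∀ t ∈ TI, ∑ p, w p * N.C p t ≤ 0

/-- The `TI`-induced subnet is conflict-free: every place has at most one
output transition among `TI`. -/
def ConflictFreeSubnet (N : PetriNet m n) (TI : Set (Fin n)) : Prop :=
  ∀ p : Fin m, ∀ t ∈ TI, ∀ t' ∈ TI, 0 < N.Pre p t → 0 < N.Pre p t' → t = t'

/-- `σ` consists only of transitions in `TI`. -/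
def ImplicitSeq (TI : Set (Fin n)) (σ : List (Fin n)) : Prop := ∀ t ∈ σ, t ∈ TI

/-- Implicit reach of a marking `Mb`. -/
def RI (N : PetriNet m n) (TI : Set (Fin n)) (Mb : Fin m → ℕ) : Set (Fin m → ℕ) :=
  {M | ∃ σ, ImplicitSeq TI σ ∧ N.fires Mb σ M}

/-- Reachability set. -/
def Reach (N : PetriNet m n) (M0 : Fin m → ℕ) : Set (Fin m → ℕ) :=
  {M | ∃ σ, N.fires M0 σ M}

/-- State equation `M' = M + C·y` (the nonnegativity `M' ≥ 0` is implicit in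
`M' : Fin m → ℕ`). -/
def stateEq (N : PetriNet m n) (M : Fin m → ℕ) (y : Fin n → ℕ) (M' : Fin m → ℕ) : Prop :=
  ∀ p, (M' p : ℤ) = (M p : ℤ) + ∑ t, N.C p t * (y t : ℤ)

/-- `σ` is an explanation of `t` at `M`: an implicit sequence after which `t`
is enabled. -/
def IsExplanation (N : PetriNet m n) (TI : Set (Fin n)) (M : Fin m → ℕ)
    (t : Fin n) (σ : List (Fin n)) : Prop :=
  ImplicitSeq TI σ ∧ ∃ M', N.fires M σ M' ∧ N.enabled M' t

/-- `y` is a minimal explanation vector of `t` at `M`. -/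
def MinExplVec (N : PetriNet m n) (TI : Set (Fin n)) (M : Fin m → ℕ)
    (t : Fin n) (y : Fin n → ℕ) : Prop :=
  (∃ σ, N.IsExplanation TI M t σ ∧ fvec σ = y) ∧
    ∀ σ', N.IsExplanation TI M t σ' → ¬ fvec σ' < y

/-- `y` is the firing vector of some implicit sequence firable at `M`. -/
def FirableVec (N : PetriNet m n) (TI : Set (Fin n)) (M : Fin m → ℕ)
    (y : Fin n → ℕ) : Prop :=
  ∃ σ M', ImplicitSeq TI σ ∧ fvec σ = y ∧ N.fires M σ M'

/-- `y` is a maximal implicit firing vector at `M`. -/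
def MaximalIFV (N : PetriNet m n) (TI : Set (Fin n)) (M : Fin m → ℕ)
    (y : Fin n → ℕ) : Prop :=
  N.FirableVec TI M y ∧ ∀ y', N.FirableVec TI M y' → ¬ y < y'

/-- `y` is the maximal implicit firing vector at `M`, dominating all others. -/
def GreatestIFV (N : PetriNet m n) (TI : Set (Fin n)) (M : Fin m → ℕ)
    (y : Fin n → ℕ) : Prop :=
  N.FirableVec TI M y ∧ ∀ y', N.FirableVec TI M y' → y' ≤ y

/-- One step of the BRG: fire a minimal explanation followed by an explicit
transition `t ∉ TI`. -/
def BRGstep (N : PetriNet m n) (TI : Set (Fin n)) (M1 M2 : Fin m → ℕ) : Prop :=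
  ∃ t ∉ TI, ∃ y, N.MinExplVec TI M1 t y ∧
    ∀ p, (M2 p : ℤ) = (M1 p : ℤ) + (∑ s, N.C p s * (y s : ℤ)) + N.C p t

/-- `Mb` is a basis marking of the BRG with initial marking `M0`. -/
def Basis (N : PetriNet m n) (TI : Set (Fin n)) (M0 Mb : Fin m → ℕ) : Prop :=
  Relation.ReflTransGen (N.BRGstep TI) M0 Mb

/-- A marking is dead if it enables no transition. -/
def Dead (N : PetriNet m n) (M : Fin m → ℕ) : Prop := ∀ t, ¬ N.enabled M t

/-- Final markings of the GMEC `(w, k)`. -/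
def Final (w : Fin m → ℤ) (k : ℤ) (M : Fin m → ℕ) : Prop :=
  ∑ p, w p * (M p : ℤ) ≤ k

/-- The plant is non-blocking. -/
def NonBlocking (N : PetriNet m n) (M0 : Fin m → ℕ) (w : Fin m → ℤ) (k : ℤ) : Prop :=
  ∀ M ∈ N.Reach M0, ∃ M' ∈ N.Reach M, Final w k M'

/-- Boundedness of the marked net. -/
def Bounded (N : PetriNet m n) (M0 : Fin m → ℕ) : Prop :=
  ∃ K, ∀ M ∈ N.Reach M0, ∀ p, M p ≤ K

end PetriNet

open PetriNet

namespace DeadAux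

variable {m n : ℕ} (N : PetriNet m n) (TI : Set (Fin n))

/-- Persistence: in a conflict-free subnet, firing `s` preserves enabledness of `t ≠ s`. -/
lemma persist (hcf : N.ConflictFreeSubnet TI) {M : Fin m → ℕ} {s t : Fin n}
    (hs : s ∈ TI) (ht : t ∈ TI) (hst : s ≠ t)
    (hse : N.enabled M s) (hte : N.enabled M t) : N.enabled (N.fire M s) t := by
  intro p
  have hsp := hse p
  have htp := hte p
  rcases Nat.eq_zero_or_pos (N.Pre p t) with h0 | hpos
  · simp [PetriNet.fire, h0]
  · have hps : N.Pre p s = 0 := by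
      by_contra h
      exact hst (hcf p s hs t ht (Nat.pos_of_ne_zero h) hpos)
    simp only [PetriNet.fire, hps]
    omega

/-- Firing commutes for non-conflicting transitions. -/
lemma fire_comm (hcf : N.ConflictFreeSubnet TI) {M : Fin m → ℕ} {s t : Fin n}
    (hs : s ∈ TI) (ht : t ∈ TI) (hst : s ≠ t)
    (hse : N.enabled M s) (hte : N.enabled M t) :
    N.fire (N.fire M s) t = N.fire (N.fire M t) s := by
  funext p
  have hsp := hse p
  have htp := hte p
  have hd : N.Pre p s = 0 ∨ N.Pre p t = 0 := by
    by_contra h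
    push_neg at h
    exact hst (hcf p s hs t ht (Nat.pos_of_ne_zero h.1) (Nat.pos_of_ne_zero h.2))
  simp only [PetriNet.fire]
  omega

/-- Exchange lemma: if `t` is enabled and occurs in a firable implicit sequence `σ`,
then `t` can be fired first. -/
lemma exchange (hcf : N.ConflictFreeSubnet TI) {t : Fin n} (ht : t ∈ TI) :
    ∀ (σ : List (Fin n)) (M M' : Fin m → ℕ), N.fires M σ M' → ImplicitSeq TI σ →
      N.enabled M t → 1 ≤ σ.count t →
      ∃ σ', N.fires (N.fire M t) σ' M' ∧ ImplicitSeq TI σ' ∧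
        ∀ u, σ'.count u + (if u = t then 1 else 0) = σ.count u := by
  intro σ
  induction σ with
  | nil => intro M M' _ _ _ hc; simp [List.count_nil] at hc
  | cons s τ ih =>
    intro M M' hf hI hte hc
    cases hf with
    | cons hse hτ =>
      by_cases hst : s = t
      · subst hst
        exact ⟨τ, hτ, fun u hu => hI u (List.mem_cons_of_mem _ hu),
          fun u => by by_cases h : u = s <;> simp [List.count_cons, h] <;> exact Ne.symm h⟩
      · have hsTI : s ∈ TI := hI s List.mem_cons_self
        have hte' : N.enabled (N.fire M s) t := persist N TI hcf hsTI ht hst hse hte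
        have hc' : 1 ≤ τ.count t := by
          have : (s :: τ).count t = τ.count t := by simp [List.count_cons, hst]
          omega
        obtain ⟨τ', hf', hI', hcnt⟩ := ih (N.fire M s) M' hτ
          (fun u hu => hI u (List.mem_cons_of_mem _ hu)) hte' hc'
        have hcomm := fire_comm N TI hcf hsTI ht hst hse hte
        have hse' : N.enabled (N.fire M t) s := persist N TI hcf ht hsTI (Ne.symm hst) hte hse
        refine ⟨s :: τ', PetriNet.fires.cons hse' ?_, ?_, ?_⟩
        · rw [← hcomm]; exact hf'
        · intro u hu
          rcases List.mem_cons.mp hu with h | h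
          · exact h ▸ hsTI
          · exact hI' u h
        · intro u
          have h1 := hcnt u
          simp only [List.count_cons] at h1 ⊢
          by_cases h : u = s <;> by_cases h2 : u = t <;>
            simp [h, h2] at h1 ⊢ <;> omega

/-- From any marking implicitly reached with a vector dominated by a firable vector,
the target of the dominating sequence is still implicitly reachable. -/
lemma reach_max (hcf : N.ConflictFreeSubnet TI) (Mbmax : Fin m → ℕ) :
    ∀ (σ : List (Fin n)) (Mb M : Fin m → ℕ), N.fires Mb σ M → ImplicitSeq TI σ →
      ∀ σmax, N.fires Mb σmax Mbmax → ImplicitSeq TI σmax →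
        (∀ u, σ.count u ≤ σmax.count u) →
        ∃ ρ, N.fires M ρ Mbmax := by
  intro σ
  induction σ with
  | nil =>
    intro Mb M hf _ σmax hfmax _ _
    cases hf
    exact ⟨σmax, hfmax⟩
  | cons t τ ih =>
    intro Mb M hf hI σmax hfmax hImax hle
    cases hf with
    | cons hte hτ =>
      have htTI : t ∈ TI := hI t List.mem_cons_self
      have hc : 1 ≤ σmax.count t := by
        have := hle t
        simp [List.count_cons] at this
        omega
      obtain ⟨σmax', hf', hI', hcnt⟩ := exchange N TI hcf htTI σmax Mb Mbmax hfmax hImax hte hc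
      refine ih (N.fire Mb t) M hτ (fun u hu => hI u (List.mem_cons_of_mem _ hu))
        σmax' hf' hI' ?_
      intro u
      have h1 := hcnt u
      have h2 := hle u
      simp only [List.count_cons] at h2
      by_cases h : u = t
      · subst h; rw [if_pos rfl] at h1; simp at h2; omega
      · rw [if_neg h] at h1; simp [beq_iff_eq, Ne.symm h] at h2; omega

end DeadAux

/-- if the implicit reach of a basis marking contains a dead
marking, then the only dead marking it contains is the i-maximal marking. -/
theorem dead_in_ri_is_imax {m n : ℕ} (N : PetriNet m n) (TI : Set (Fin n))
    (w : Fin m → ℤ)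
    (hacyc : N.SubnetAcyclic TI) (hnc : N.NonConflicting TI)
    (hni : N.NonIncreasing w TI) (hcf : N.ConflictFreeSubnet TI)
    (M0 Mb Mbmax : Fin m → ℕ) (hMb : N.Basis TI M0 Mb)
    (ymax : Fin n → ℕ) (hmax : N.GreatestIFV TI Mb ymax)
    (hreach : ∃ σ, ImplicitSeq TI σ ∧ fvec σ = ymax ∧ N.fires Mb σ Mbmax)
    (hdead : ∃ M ∈ N.RI TI Mb, N.Dead M) :
    {M | M ∈ N.RI TI Mb ∧ N.Dead M} = {Mbmax} := by
  obtain ⟨σmax, hImax, hvmax, hfmax⟩ := hreach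
  have key : ∀ M, M ∈ N.RI TI Mb → N.Dead M → M = Mbmax := by
    rintro M ⟨σ, hσI, hσf⟩ hMdead
    have hfv : N.FirableVec TI Mb (fvec σ) := ⟨σ, M, hσI, rfl, hσf⟩
    have hle' : fvec σ ≤ ymax := hmax.2 _ hfv
    have hle : ∀ u, σ.count u ≤ σmax.count u := by
      intro u
      have h1 := hle' u
      have h2 := congrFun hvmax u
      simp [fvec] at h1 h2 ⊢
      omega
    obtain ⟨ρ, hρ⟩ := DeadAux.reach_max N TI hcf Mbmax σ Mb M hσf hσI σmax hfmax hImax hle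
    cases hρ with
    | nil => rfl
    | cons hen _ => exact absurd hen (hMdead _)
  ext M
  simp only [Set.mem_setOf_eq, Set.mem_singleton_iff]
  constructor
  · rintro ⟨hRI, hD⟩
    exact key M hRI hD
  · rintro rfl
    obtain ⟨Md, hMdRI, hMdD⟩ := hdead
    have := key Md hMdRI hMdD
    subst this
    exact ⟨⟨σmax, hImax, hfmax⟩, hMdD⟩
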